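/- For every $d \times d$ correlation matrix $C$, the matrix $\frac{1}{d} C + \frac{d-1}{d} I_d$ lies in the convex hull of rank-one correlation matrices $zz^*$ with $|z_i| = 1$ for all $i$. -/

import Mathlib

open Matrix
open scoped ComplexOrder
open Finset

noncomputable def chi4 : ZMod 4 → ℂ := fun k => Complex.I ^ k.val
lemma chi4_zero : chi4 0 = 1 := rfl
lemma chi4_add (a b : ZMod 4) : chi4 (a + b) = chi4 a * chi4 b := by
  have hmod : ∀ n : ℕ, Complex.I ^ n = Complex.I ^ (n % 4) := by
    intro n
    conv_lhs => rw [← Nat.div_add_mod n 4]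
    rw [pow_add, pow_mul, Complex.I_pow_four, one_pow, one_mul]
  show Complex.I ^ (a + b).val = _
  rw [ZMod.val_add, ← hmod, pow_add]
  rfl
lemma chi4_norm (a : ZMod 4) : ‖chi4 a‖ = 1 := by simp [chi4, norm_pow]
lemma chi4_ne_zero (a : ZMod 4) : chi4 a ≠ 0 := by
  intro h; have := chi4_norm a; rw [h] at this; simp at this
lemma chi4_neg (a : ZMod 4) : chi4 (-a) = starRingEnd ℂ (chi4 a) := by
  have h1 : chi4 a * chi4 (-a) = 1 := by rw [← chi4_add]; simp [chi4_zero]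
  have h2 : chi4 a * starRingEnd ℂ (chi4 a) = 1 := by
    rw [Complex.mul_conj]
    norm_cast
    simp [Complex.normSq_eq_norm_sq, chi4_norm]
  exact mul_left_cancel₀ (chi4_ne_zero a) (h1.trans h2.symm)
lemma chi4_sum {α : Type*} (s : Finset α) (g : α → ZMod 4) :
    chi4 (∑ c ∈ s, g c) = ∏ c ∈ s, chi4 (g c) := by
  classical
  induction s using Finset.cons_induction with
  | empty => simp [chi4_zero]
  | cons a s ha ih => rw [Finset.sum_cons, Finset.prod_cons, chi4_add, ih]
lemma chi4_ne_one (m : ZMod 4) (h : m ≠ 0) : chi4 m ≠ 1 := by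
  have h3 : m = 1 ∨ m = 2 ∨ m = 3 := by
    revert h; exact (by decide : ∀ m : ZMod 4, m ≠ 0 → m = 1 ∨ m = 2 ∨ m = 3) m
  rcases h3 with rfl | rfl | rfl
  · show Complex.I ^ ((1 : ZMod 4)).val ≠ 1
    rw [show ((1:ZMod 4)).val = 1 from rfl, pow_one]
    intro hc; have := congrArg Complex.im hc; norm_num at this
  · show Complex.I ^ ((2 : ZMod 4)).val ≠ 1
    rw [show ((2:ZMod 4)).val = 2 from rfl, sq, Complex.I_mul_I]
    intro hc; have := congrArg Complex.re hc; norm_num at this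
  · show Complex.I ^ ((3 : ZMod 4)).val ≠ 1
    rw [show ((3:ZMod 4)).val = 3 from rfl, pow_succ, sq, Complex.I_mul_I]
    intro hc; have := congrArg Complex.im hc; norm_num at this
lemma chi4_orth (m : ZMod 4) : ∑ x : ZMod 4, chi4 (m * x) = if m = 0 then 4 else 0 := by
  by_cases h : m = 0
  · simp [h, chi4_zero, Finset.card_univ]
  · rw [if_neg h]
    have key : chi4 m * ∑ x : ZMod 4, chi4 (m * x) = ∑ x : ZMod 4, chi4 (m * x) := by
      rw [Finset.mul_sum]
      rw [← Equiv.sum_comp (Equiv.addRight (1 : ZMod 4)) (fun x => chi4 (m * x))]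
      apply Finset.sum_congr rfl
      intro x _
      simp [Equiv.addRight, mul_add, chi4_add]
      ring
    by_contra hS
    have h1 : (chi4 m - 1) * ∑ x : ZMod 4, chi4 (m * x) = 0 := by
      rw [sub_mul, key, one_mul, sub_self]
    rcases mul_eq_zero.mp h1 with h2 | h2
    · exact chi4_ne_one m h (by linear_combination h2)
    · exact hS h2

noncomputable def cdelta {d : ℕ} (a : Fin d) : Fin d → ZMod 4 := fun c => if c = a then 1 else 0

lemma L1 {d : ℕ} (m : Fin d → ZMod 4) :
    ∑ f : Fin d → ZMod 4, chi4 (∑ c, m c * f c) = if m = 0 then (4:ℂ)^d else 0 := by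
  classical
  have h1 : ∀ f : Fin d → ZMod 4, chi4 (∑ c, m c * f c) = ∏ c, chi4 (m c * f c) :=
    fun f => chi4_sum _ _
  simp_rw [h1]
  rw [← Fintype.piFinset_univ,
    ← Finset.prod_univ_sum (fun _ : Fin d => (univ : Finset (ZMod 4)))
      (fun c x => chi4 (m c * x))]
  simp_rw [chi4_orth]
  by_cases hm : m = 0
  · simp [hm, Finset.card_univ]
  · obtain ⟨c, hc⟩ := Function.ne_iff.mp hm
    rw [if_neg hm]
    simp only [Pi.zero_apply] at hc
    exact Finset.prod_eq_zero (Finset.mem_univ c) (by rw [if_neg hc])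

lemma delta_sum {d : ℕ} (k l i j : Fin d) (f : Fin d → ZMod 4) :
    ∑ c, (cdelta l c + cdelta i c - cdelta k c - cdelta j c) * f c = f l + f i - f k - f j := by
  simp [cdelta, add_mul, sub_mul, ite_mul, one_mul, zero_mul,
    Finset.sum_add_distrib, Finset.sum_sub_distrib, Finset.sum_ite_eq']

lemma delta_eq {d : ℕ} (i j k l : Fin d) :
    (fun c => cdelta l c + cdelta i c - cdelta k c - cdelta j c) = 0
      ↔ ((k = i ∧ l = j) ∨ (k = l ∧ i = j)) := by
  constructor
  · intro h
    have hc : ∀ c, cdelta l c + cdelta i c = cdelta k c + cdelta j c := by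
      intro c
      have hh := congrFun h c
      simp only [Pi.zero_apply, sub_eq_zero] at hh
      linear_combination hh
    by_cases hij : i = j
    · subst hij
      right
      refine ⟨?_, rfl⟩
      have h1 := hc l
      have h2 : cdelta l l = cdelta k l := add_right_cancel h1
      simp only [cdelta, if_pos rfl] at h2
      by_cases hlk : l = k
      · exact hlk.symm
      · rw [if_neg hlk] at h2; exact absurd h2 (by decide)
    · left
      have hji : j ≠ i := fun hh => hij hh.symm
      have hLJ : l = j := by
        by_contra hlj
        have h1 := hc j
        simp only [cdelta, if_pos rfl, if_neg hji,
          if_neg (fun hh : j = l => hlj hh.symm), add_zero, zero_add] at h1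
        by_cases hb : j = k
        · rw [if_pos hb] at h1; exact absurd h1 (by decide)
        · rw [if_neg hb] at h1; exact absurd h1 (by decide)
      have hKI : k = i := by
        have h2 := hc i
        have hil : i ≠ l := by rw [hLJ]; exact hij
        simp only [cdelta, if_pos rfl, if_neg hij, if_neg hil, add_zero, zero_add] at h2
        by_cases hb : i = k
        · exact hb.symm
        · rw [if_neg hb] at h2; exact absurd h2 (by decide)
      exact ⟨hKI, hLJ⟩
  · rintro (⟨rfl, rfl⟩ | ⟨rfl, rfl⟩) <;> funext c <;> simp only [Pi.zero_apply] <;> ring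

open scoped ComplexOrder

lemma M1 {d : ℕ} (C : Matrix (Fin d) (Fin d) ℂ) (hdiag : ∀ i, C i i = 1) (i j : Fin d) :
    ∑ f : Fin d → ZMod 4,
        ((star fun c => chi4 (f c)) ⬝ᵥ C *ᵥ fun c => chi4 (f c)) * (chi4 (f i) * chi4 (-f j))
      = (4:ℂ)^d * (if i = j then (d:ℂ) else C i j) := by
  classical
  have step1 : ∀ f : Fin d → ZMod 4,
      ((star fun c => chi4 (f c)) ⬝ᵥ C *ᵥ fun c => chi4 (f c)) * (chi4 (f i) * chi4 (-f j))
      = ∑ k, ∑ l, C k l * chi4 (f l + f i - f k - f j) := by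
    intro f
    simp only [dotProduct, Matrix.mulVec, Pi.star_apply, RCLike.star_def, ← chi4_neg,
      Finset.sum_mul, Finset.mul_sum]
    refine Finset.sum_congr rfl fun k _ => Finset.sum_congr rfl fun l _ => ?_
    have hsplit : f l + f i - f k - f j = f l + (f i + (-f k + -f j)) := by ring
    rw [hsplit, chi4_add, chi4_add, chi4_add]
    ring
  rw [Finset.sum_congr rfl fun f _ => step1 f]
  rw [Finset.sum_comm]
  have swap2 : ∀ k, ∑ f : Fin d → ZMod 4, ∑ l, C k l * chi4 (f l + f i - f k - f j)
      = ∑ l, C k l * (∑ f : Fin d → ZMod 4, chi4 (f l + f i - f k - f j)) := by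
    intro k
    rw [Finset.sum_comm]
    exact Finset.sum_congr rfl fun l _ => by rw [← Finset.mul_sum]
  rw [Finset.sum_congr rfl fun k _ => swap2 k]
  have inner : ∀ k l, (∑ f : Fin d → ZMod 4, chi4 (f l + f i - f k - f j))
      = if ((k = i ∧ l = j) ∨ (k = l ∧ i = j)) then (4:ℂ)^d else 0 := by
    intro k l
    have := L1 (fun c => cdelta l c + cdelta i c - cdelta k c - cdelta j c)
    simp_rw [delta_sum] at this
    rw [this, if_congr (delta_eq i j k l) rfl rfl]
  simp_rw [inner]
  by_cases hij : i = j
  · subst hij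
    have hcond : ∀ k l : Fin d, ((k = i ∧ l = i) ∨ (k = l ∧ i = i)) ↔ l = k := by
      intro k l
      constructor
      · rintro (⟨rfl, rfl⟩ | ⟨rfl, -⟩) <;> rfl
      · rintro rfl; exact Or.inr ⟨rfl, rfl⟩
    rw [if_pos rfl]
    calc ∑ k, ∑ l, C k l * (if ((k = i ∧ l = i) ∨ (k = l ∧ i = i)) then (4:ℂ)^d else 0)
        = ∑ k, ∑ l, (if l = k then C k l * (4:ℂ)^d else 0) := by
          refine Finset.sum_congr rfl fun k _ => Finset.sum_congr rfl fun l _ => ?_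
          rw [if_congr (hcond k l) rfl rfl, mul_ite, mul_zero]
      _ = ∑ k : Fin d, C k k * (4:ℂ)^d := by
          refine Finset.sum_congr rfl fun k _ => ?_
          rw [Finset.sum_ite_eq' Finset.univ k (fun l => C k l * (4:ℂ)^d)]
          simp
      _ = (4:ℂ)^d * (d:ℂ) := by
          simp [hdiag]
          ring
  · rw [if_neg hij]
    have hcond : ∀ k l : Fin d, ((k = i ∧ l = j) ∨ (k = l ∧ i = j)) ↔ (k = i ∧ l = j) := by
      intro k l
      constructor
      · rintro (h | ⟨-, h⟩)
        · exact h
        · exact absurd h hij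
      · exact Or.inl
    calc ∑ k, ∑ l, C k l * (if ((k = i ∧ l = j) ∨ (k = l ∧ i = j)) then (4:ℂ)^d else 0)
        = ∑ k, (if k = i then (∑ l, if l = j then C k l * (4:ℂ)^d else 0) else 0) := by
          refine Finset.sum_congr rfl fun k _ => ?_
          by_cases hk : k = i
          · rw [if_pos hk]
            refine Finset.sum_congr rfl fun l _ => ?_
            rw [if_congr (hcond k l) rfl rfl]
            by_cases hl : l = j <;> simp [hk, hl]
          · rw [if_neg hk]
            apply Finset.sum_eq_zero; intro l _
            rw [if_congr (hcond k l) rfl rfl]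
            simp [hk]
      _ = (4:ℂ)^d * C i j := by
          rw [Finset.sum_ite_eq' Finset.univ i
            (fun k => (∑ l, if l = j then C k l * (4:ℂ)^d else 0))]
          rw [if_pos (Finset.mem_univ i),
            Finset.sum_ite_eq' Finset.univ j (fun l => C i l * (4:ℂ)^d)]
          rw [if_pos (Finset.mem_univ j)]
          ring


/-- For every `d × d` correlation matrix `C`, the matrix `(1/d) C + ((d-1)/d) I`
lies in the convex hull of the rank-one correlation matrices `z z*` with all
`|zᵢ| = 1`. -/
theorem correlation_convex_combination_rank_one (d : ℕ)
    (C : Matrix (Fin d) (Fin d) ℂ) (hC : C.PosSemidef) (hdiag : ∀ i, C i i = 1) :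
    (1 / (d : ℝ)) • C + (((d : ℝ) - 1) / d) • (1 : Matrix (Fin d) (Fin d) ℂ) ∈
      convexHull ℝ {A : Matrix (Fin d) (Fin d) ℂ |
        ∃ z : Fin d → ℂ, (∀ i, ‖z i‖ = 1) ∧ A = Matrix.of fun i j => z i * star (z j)} := by
  classical
  rcases Nat.eq_zero_or_pos d with hd | hd
  · subst hd
    apply subset_convexHull
    refine ⟨fun _ => 1, fun i => by simp, ?_⟩
    ext i j
    exact i.elim0
  have hdR : (0 : ℝ) < (d : ℝ) := by exact_mod_cast hd
  set A : (Fin d → ZMod 4) → Matrix (Fin d) (Fin d) ℂ :=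
    fun f => Matrix.of fun i j => chi4 (f i) * star (chi4 (f j)) with hA
  set Q : (Fin d → ZMod 4) → ℂ :=
    fun f => (star fun c => chi4 (f c)) ⬝ᵥ C *ᵥ fun c => chi4 (f c) with hQdef
  set w : (Fin d → ZMod 4) → ℝ := fun f => (Q f).re / (d * 4 ^ d) with hwdef
  have hD : (0 : ℝ) < (d : ℝ) * 4 ^ d := by positivity
  have hQ0 : ∀ f, 0 ≤ Q f := fun f => hC.dotProduct_mulVec_nonneg _
  have hQre : ∀ f, 0 ≤ (Q f).re ∧ (Q f).im = 0 := by
    intro f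
    have h := hQ0 f
    rw [Complex.le_def] at h
    exact ⟨by simpa using h.1, by simpa using h.2.symm⟩
  have hQeq : ∀ f, ((Q f).re : ℂ) = Q f := by
    intro f
    apply Complex.ext
    · simp
    · simp [(hQre f).2]
  have hw0 : ∀ f, 0 ≤ w f := fun f => div_nonneg (hQre f).1 hD.le
  -- sum of Q
  set i0 : Fin d := ⟨0, hd⟩
  have hQsum : ∑ f : Fin d → ZMod 4, Q f = (4:ℂ)^d * (d:ℂ) := by
    have h1 : ∀ f : Fin d → ZMod 4, Q f = Q f * (chi4 (f i0) * chi4 (-f i0)) := by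
      intro f
      rw [← chi4_add, add_neg_cancel, chi4_zero, mul_one]
    rw [Finset.sum_congr rfl fun f _ => h1 f, hQdef]
    rw [M1 C hdiag i0 i0, if_pos rfl]
  have hwsum : ∑ f : Fin d → ZMod 4, w f = 1 := by
    rw [hwdef, ← Finset.sum_div]
    have h2 : ∑ f : Fin d → ZMod 4, (Q f).re = (d : ℝ) * 4 ^ d := by
      have h3 := congrArg Complex.re hQsum
      rw [Complex.re_sum] at h3
      rw [h3]
      have : ((4:ℂ)^d * (d:ℂ)) = (((4:ℝ)^d * (d:ℝ) : ℝ) : ℂ) := by push_cast; ring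
      rw [this, Complex.ofReal_re]
      ring
    rw [h2, div_self hD.ne']
  -- the matrix identity
  have hkey : ∑ f : Fin d → ZMod 4, w f • A f
      = (1 / (d : ℝ)) • C + (((d : ℝ) - 1) / d) • (1 : Matrix (Fin d) (Fin d) ℂ) := by
    ext i j
    rw [Matrix.sum_apply]
    have hentry : ∀ f : Fin d → ZMod 4, (w f • A f) i j
        = (1 / ((d:ℂ) * 4 ^ d)) * (Q f * (chi4 (f i) * chi4 (-f j))) := by
      intro f
      simp only [hA, Matrix.smul_apply, Matrix.of_apply, RCLike.star_def]
      rw [Complex.real_smul, hwdef]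
      push_cast
      rw [hQeq f, chi4_neg]
      ring
    rw [Finset.sum_congr rfl fun f _ => hentry f, ← Finset.mul_sum, hQdef]
    rw [M1 C hdiag i j]
    rw [Matrix.add_apply, Matrix.smul_apply, Matrix.smul_apply, Matrix.one_apply,
      Complex.real_smul, Complex.real_smul]
    by_cases hij : i = j
    · subst hij
      rw [if_pos rfl, if_pos rfl, hdiag i]
      have h4 : ((4:ℂ)^d : ℂ) ≠ 0 := by positivity
      have hdC : ((d:ℂ)) ≠ 0 := by exact_mod_cast hdR.ne'
      push_cast
      field_simp
      ring
    · rw [if_neg hij, if_neg hij]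
      have hdC : ((d:ℂ)) ≠ 0 := by exact_mod_cast hdR.ne'
      have h4 : ((4:ℂ)^d : ℂ) ≠ 0 := by positivity
      push_cast
      field_simp
      ring
  rw [← hkey]
  have hmem : ∀ f ∈ (Finset.univ : Finset (Fin d → ZMod 4)),
      A f ∈ {A : Matrix (Fin d) (Fin d) ℂ |
        ∃ z : Fin d → ℂ, (∀ i, ‖z i‖ = 1) ∧ A = Matrix.of fun i j => z i * star (z j)} :=
    fun f _ => ⟨fun c => chi4 (f c), fun c => chi4_norm _, rfl⟩
  have hmass := Finset.centerMass_mem_convexHull (Finset.univ : Finset (Fin d → ZMod 4))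
    (fun f _ => hw0 f) (by rw [hwsum]; norm_num) hmem
  rwa [Finset.centerMass_eq_of_sum_1 _ _ hwsum] at hmass
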